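/- Let A be a ring with property (SF) which satisfies the strong rank condition. Let N be a free A-module and M ≤ N a submodule such that at least one of M or N is finitely generated, and let L be the algebraic closure of the extension M ≤ N (so M ≤alg L ≤* N). Then every submodule L' of N with M ≤ L' such that the extension M ≤ L' is algebraic satisfies L' ≤ L; consequently L is the union of all algebraic extensions of M inside N. -/

import Mathlib

universe u v

/-- Property (SF): every submodule of every free `A`-module is a free `A`-module. -/
def HasSF (A : Type u) [Ring A] : Prop :=
  ∀ (M : Type v) [AddCommGroup M] [Module A M], Module.Free A M →
    ∀ N : Submodule A M, Module.Free A ↥N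

/-- `M` is a free factor of `N` (written `M ≤* N`): `M ≤ N` and there is a submodule
`M' ≤ N` with `M ⊓ M' = ⊥` and `M ⊔ M' = N` such that `M'` is a free module. -/
def IsFreeFactor {A : Type*} [Ring A] {P : Type*} [AddCommGroup P] [Module A P]
    (M N : Submodule A P) : Prop :=
  M ≤ N ∧ ∃ M' : Submodule A P, M' ≤ N ∧ M ⊓ M' = ⊥ ∧ M ⊔ M' = N ∧ Module.Free A ↥M'

/-- The extension `M ≤ N` is algebraic: the only submodule `L` with `M ≤ L ≤ N`
which is a free factor of `N` is `L = N`. -/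
def IsAlgExt {A : Type*} [Ring A] {P : Type*} [AddCommGroup P] [Module A P]
    (M N : Submodule A P) : Prop :=
  M ≤ N ∧ ∀ L : Submodule A P, M ≤ L → IsFreeFactor L N → L = N

theorem algebraicClosure_eq_union_algExts {A : Type u} [Ring A] [StrongRankCondition A]
    (hSF : HasSF.{u, v} A)
    (N : Type v) [AddCommGroup N] [Module A N] [Module.Free A N]
    (M : Submodule A N) (hfg : M.FG ∨ Module.Finite A N)
    (L : Submodule A N) (hLalg : IsAlgExt M L) (hLff : IsFreeFactor L ⊤) :
    (∀ L' : Submodule A N, IsAlgExt M L' → L' ≤ L) ∧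
    (L : Set N) = ⋃ L' ∈ {L' : Submodule A N | IsAlgExt M L'}, (L' : Set N) := by
  obtain ⟨-, C, -, hLC_inf, hLC_sup, hCfree⟩ := hLff
  have hcompl : IsCompl L C := ⟨disjoint_iff.2 hLC_inf, codisjoint_iff.2 (by simpa using hLC_sup)⟩
  -- projection onto C with kernel L
  set π : N →ₗ[A] ↥C := Submodule.linearProjOfIsCompl C L hcompl.symm with hπ
  have hkerπ : LinearMap.ker π = L := Submodule.linearProjOfIsCompl_ker _
  have key : ∀ L' : Submodule A N, IsAlgExt M L' → L' ≤ L := by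
    intro L'' hL''
    obtain ⟨hML, halg⟩ := hL''
    set f : ↥L'' →ₗ[A] ↥C := π.comp L''.subtype with hf
    haveI hQfree : Module.Free A ↥(LinearMap.range f) := hSF ↥C hCfree (LinearMap.range f)
    haveI : Module.Projective A ↥(LinearMap.range f) := inferInstance
    obtain ⟨s, hs⟩ := Module.projective_lifting_property f.rangeRestrict LinearMap.id
      f.surjective_rangeRestrict
    have hs' : ∀ q, f.rangeRestrict (s q) = q := fun q => by
      have := LinearMap.congr_fun hs q; exact this
    have hsinj : Function.Injective s := by
      intro a b h
      have := hs' a; rw [h, hs' b] at this; exact this.symm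
    -- the complement inside L''
    have hinf : LinearMap.ker f ⊓ LinearMap.range s = ⊥ := by
      rw [eq_bot_iff]
      rintro x ⟨hx, q, rfl⟩
      have : f.rangeRestrict (s q) = 0 := by
        rwa [← LinearMap.mem_ker, LinearMap.ker_rangeRestrict]
      rw [hs' q] at this
      simp [this]
    have hsup : LinearMap.ker f ⊔ LinearMap.range s = ⊤ := by
      rw [eq_top_iff]
      intro x _
      have hx1 : x - s (f.rangeRestrict x) ∈ LinearMap.ker f := by
        rw [LinearMap.mem_ker]
        have : f.rangeRestrict (x - s (f.rangeRestrict x)) = 0 := by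
          rw [map_sub, hs' (f.rangeRestrict x), sub_self]
        have h2 : f (x - s (f.rangeRestrict x)) =
            (f.rangeRestrict (x - s (f.rangeRestrict x)) : ↥C) := rfl
        rw [h2, this]; rfl
      have : x = (x - s (f.rangeRestrict x)) + s (f.rangeRestrict x) := by abel
      rw [this]
      exact Submodule.add_mem_sup hx1 ⟨_, rfl⟩
    have hkerf : LinearMap.ker f = Submodule.comap L''.subtype L := by
      rw [hf, LinearMap.ker_comp, hkerπ]
    -- push everything into N
    set S : Submodule A N := Submodule.map L''.subtype (LinearMap.range s) with hS
    have hKmap : Submodule.map L''.subtype (LinearMap.ker f) = L ⊓ L'' := by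
      rw [hkerf, Submodule.map_comap_subtype, inf_comm]
    have hinj : Function.Injective L''.subtype := Subtype.val_injective
    have hff : IsFreeFactor (L ⊓ L'') L'' := by
      refine ⟨inf_le_right, S, ?_, ?_, ?_, ?_⟩
      · rw [hS]
        rintro x ⟨y, -, rfl⟩
        exact y.2
      · rw [← hKmap, hS, ← Submodule.map_inf _ hinj, hinf, Submodule.map_bot]
      · rw [← hKmap, hS, ← Submodule.map_sup, hsup, Submodule.map_top,
          Submodule.range_subtype]
      · have e1 : ↥(LinearMap.range s) ≃ₗ[A] ↥S :=
          Submodule.equivMapOfInjective L''.subtype hinj (LinearMap.range s)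
        have e2 : ↥(LinearMap.range f) ≃ₗ[A] ↥(LinearMap.range s) :=
          LinearEquiv.ofInjective s hsinj
        exact Module.Free.of_equiv (e2.trans e1)
    have := halg (L ⊓ L'') (le_inf (hLalg.1) hML) hff
    rw [← this]
    exact inf_le_left
  refine ⟨key, ?_⟩
  ext x
  simp only [Set.mem_iUnion, SetLike.mem_coe, Set.mem_setOf_eq]
  constructor
  · intro hx
    exact ⟨L, hLalg, hx⟩
  · rintro ⟨L'', hL'', hx⟩
    exact key L'' hL'' hx
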